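/- For the quasi-polynomials ψ_n = h_n^{-1/2} p_n e^{-V/2} with V a polynomial of degree d+1, the derivative matrix P defined by ψ_n' = ∑_m P_{nm} ψ_m equals P = -(1/2)(V'(Q)_+ - V'(Q)_-), where Q is the Jacobi matrix of the three-term recursion and A_± denote the strictly upper/lower triangular parts. -/

import Mathlib

open Polynomial

/-- Entry of the `K`-th power of a banded (tridiagonal) semi-infinite matrix. -/
noncomputable def matPow (Q : ℕ → ℕ → ℂ) : ℕ → ℕ → ℕ → ℂ
  | 0 => fun n m => if n = m then 1 else 0
  | K + 1 => fun n m => ∑ k ∈ Finset.range (n + K + 2), matPow Q K n k * Q k m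

/-- Entry of `W(Q)` for a polynomial `W` and a banded semi-infinite matrix `Q`. -/
noncomputable def polyMat (W : Polynomial ℂ) (Q : ℕ → ℕ → ℂ) (n m : ℕ) : ℂ :=
  ∑ K ∈ Finset.range (W.natDegree + 1), W.coeff K * matPow Q K n m

lemma monic_basis_expand (p : ℕ → Polynomial ℂ) (hp : ∀ n, (p n).Monic ∧ (p n).natDegree = n) :
    ∀ (N : ℕ) (r : Polynomial ℂ), r.degree < N → ∃ c : ℕ → ℂ, r = ∑ k ∈ Finset.range N, c k • p k := by
  intro N
  induction N with
  | zero =>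
    intro r hr
    refine ⟨0, ?_⟩
    have : r = 0 := by
      by_contra h
      rw [Polynomial.degree_eq_natDegree h] at hr
      exact absurd hr (by simp)
    simp [this]
  | succ N ih =>
    intro r hr
    by_cases h : r.degree < N
    · obtain ⟨c, hc⟩ := ih r h
      refine ⟨Function.update c N 0, ?_⟩
      rw [Finset.sum_range_succ, Function.update_self, zero_smul, add_zero, hc]
      exact Finset.sum_congr rfl fun k hk => by
        rw [Function.update_of_ne (Finset.mem_range.mp hk).ne]
    · have hr0 : r ≠ 0 := fun h0 => h (by rw [h0, Polynomial.degree_zero]; exact WithBot.bot_lt_coe N)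
      rw [Polynomial.degree_eq_natDegree hr0] at hr h
      have hrN : r.natDegree = N := by
        have h1 : r.natDegree < N + 1 := by exact_mod_cast hr
        have h2 : ¬ r.natDegree < N := fun hh => h (by exact_mod_cast hh)
        omega
      set q : Polynomial ℂ := r - C (r.coeff N) * p N with hq
      have hqdeg : q.degree < N := by
        rw [Polynomial.degree_lt_iff_coeff_zero]
        intro m hm
        have hm' : N ≤ m := by exact_mod_cast hm
        rcases eq_or_lt_of_le hm' with heq | hlt
        · subst heq
          have h1 : (p N).coeff N = 1 := by
            have := (hp N).1.coeff_natDegree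
            rwa [(hp N).2] at this
          simp [hq, h1]
        · have h1 : r.coeff m = 0 := Polynomial.coeff_eq_zero_of_natDegree_lt (hrN ▸ hlt)
          have h2 : (p N).coeff m = 0 := Polynomial.coeff_eq_zero_of_natDegree_lt (by rw [(hp N).2]; exact hlt)
          simp [hq, h1, h2]
      obtain ⟨c, hc⟩ := ih q hqdeg
      refine ⟨Function.update c N (r.coeff N), ?_⟩
      rw [Finset.sum_range_succ, Function.update_self]
      have h2 : (∑ k ∈ Finset.range N, Function.update c N (r.coeff N) k • p k) = q := by
        rw [hc]
        exact Finset.sum_congr rfl fun k hk => by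
          rw [Function.update_of_ne (Finset.mem_range.mp hk).ne]
      rw [h2, Polynomial.smul_eq_C_mul, hq]
      ring

theorem stmt7 (d : ℕ) (V : Polynomial ℂ) (hV : V.natDegree = d + 1)
    (I : (ℂ → ℂ) →ₗ[ℂ] ℂ)
    (p : ℕ → Polynomial ℂ) (hp : ∀ n, (p n).Monic ∧ (p n).natDegree = n)
    (s : ℕ → ℂ) (hs : ∀ n, s n ≠ 0)
    (ψ : ℕ → ℂ → ℂ)
    (hψ : ∀ n x, ψ n x = eval x (p n) * Complex.exp (-(eval x V) / 2) / s n)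
    (horth : ∀ n m, I (fun x => ψ n x * ψ m x) = if n = m then 1 else 0)
    (Q : ℕ → ℕ → ℂ) (hQ : ∀ n m, Q n m = I (fun x => x * ψ n x * ψ m x))
    (P : ℕ → ℕ → ℂ) (hP : ∀ n m, P n m = I (fun x => deriv (ψ n) x * ψ m x))
    (hanti : ∀ n m, P n m + P m n = 0) :
    ∀ n m : ℕ,
      P n m =
        -(1 / 2) * ((if n < m then polyMat (derivative V) Q n m else 0)
          - (if m < n then polyMat (derivative V) Q n m else 0)) := by
  -- I applied to a finite linear combination of ψ's times ψ m
  have Isum : ∀ (F : Finset ℕ) (c : ℕ → ℂ) (m : ℕ),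
      I (fun x => (∑ k ∈ F, c k * ψ k x) * ψ m x) = if m ∈ F then c m else 0 := by
    intro F c m
    have hfe : (fun x => (∑ k ∈ F, c k * ψ k x) * ψ m x)
        = ∑ k ∈ F, c k • (fun x => ψ k x * ψ m x) := by
      funext x
      simp only [Finset.sum_apply, Pi.smul_apply, smul_eq_mul, Finset.sum_mul]
      exact Finset.sum_congr rfl fun k _ => by ring
    rw [hfe, map_sum]
    simp only [map_smul, horth, smul_eq_mul, mul_ite, mul_one, mul_zero]
    exact Finset.sum_ite_eq' F m c
  -- expansion of (poly of degree < N) * weight / s n in terms of ψ's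
  have expand : ∀ (r : Polynomial ℂ) (N n : ℕ), r.degree < N →
      ∃ c : ℕ → ℂ, ∀ x, eval x r * Complex.exp (-(eval x V) / 2) / s n
        = ∑ k ∈ Finset.range N, c k * ψ k x := by
    intro r N n hr
    obtain ⟨c, hc⟩ := monic_basis_expand p hp N r hr
    refine ⟨fun k => c k * s k / s n, fun x => ?_⟩
    rw [hc]
    simp only [eval_finset_sum, eval_smul, smul_eq_mul]
    rw [Finset.sum_mul, Finset.sum_div]
    refine Finset.sum_congr rfl fun k _ => ?_
    rw [hψ k x]
    field_simp [hs n, hs k]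
  -- expansion of x * ψ n in terms of Q
  have hQkey : ∀ n : ℕ, (∀ x, x * ψ n x = ∑ k ∈ Finset.range (n + 2), Q n k * ψ k x)
      ∧ (∀ m, n + 1 < m → Q n m = 0) := by
    intro n
    have hXdeg : (X * p n : Polynomial ℂ).degree < ((n + 2 : ℕ) : WithBot ℕ) := by
      rw [degree_mul, degree_X, Polynomial.degree_eq_natDegree (hp n).1.ne_zero, (hp n).2]
      exact_mod_cast by omega
    obtain ⟨c, hc⟩ := expand (X * p n) (n + 2) n hXdeg
    have hptw : ∀ x, x * ψ n x = ∑ k ∈ Finset.range (n + 2), c k * ψ k x := by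
      intro x
      rw [hψ n x, ← hc x, eval_mul, eval_X]
      ring
    have hQc : ∀ m, Q n m = if m ∈ Finset.range (n + 2) then c m else 0 := by
      intro m
      rw [hQ n m,
        show (fun x => x * ψ n x * ψ m x)
          = fun x => (∑ k ∈ Finset.range (n + 2), c k * ψ k x) * ψ m x from
          funext fun x => by rw [← hptw x]]
      exact Isum _ _ _
    constructor
    · intro x
      rw [hptw x]
      refine Finset.sum_congr rfl fun k hk => ?_
      rw [hQc k, if_pos hk]
    · intro m hm
      rw [hQc m, if_neg (by simp; omega)]
  have hQexp := fun n => (hQkey n).1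
  have hQband : ∀ n m, n + 1 < m → Q n m = 0 := fun n => (hQkey n).2
  -- bandedness of matPow
  have hMband : ∀ K n m, n + K < m → matPow Q K n m = 0 := by
    intro K
    induction K with
    | zero =>
      intro n m h
      simp only [matPow]
      rw [if_neg (by omega)]
    | succ K ih =>
      intro n m h
      simp only [matPow]
      refine Finset.sum_eq_zero fun k hk => ?_
      by_cases hk2 : n + K < k
      · rw [ih n k hk2, zero_mul]
      · rw [hQband k m (by omega), mul_zero]
  -- powers of x acting on ψ
  have hpow : ∀ K n (x : ℂ), x ^ K * ψ n x
      = ∑ k ∈ Finset.range (n + K + 1), matPow Q K n k * ψ k x := by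
    intro K
    induction K with
    | zero =>
      intro n x
      simp only [pow_zero, one_mul, matPow, ite_mul, one_mul, zero_mul]
      rw [Finset.sum_ite_eq, if_pos (by simp)]
    | succ K ih =>
      intro n x
      have step1 : x ^ (K + 1) * ψ n x
          = ∑ k ∈ Finset.range (n + K + 1), matPow Q K n k * (x * ψ k x) := by
        have : x ^ (K + 1) * ψ n x = x * (x ^ K * ψ n x) := by ring
        rw [this, ih n x, Finset.mul_sum]
        exact Finset.sum_congr rfl fun k _ => by ring
      have step2 : ∀ k ∈ Finset.range (n + K + 1),
          matPow Q K n k * (x * ψ k x)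
            = ∑ j ∈ Finset.range (n + K + 2), matPow Q K n k * (Q k j * ψ j x) := by
        intro k hk
        rw [hQexp k x, Finset.mul_sum]
        refine Finset.sum_subset (by simp at hk ⊢; omega) fun j _ hj => ?_
        rw [hQband k j (by simp at hj hk; omega), zero_mul, mul_zero]
      rw [step1, Finset.sum_congr rfl step2, Finset.sum_comm]
      refine Finset.sum_congr rfl fun j _ => ?_
      simp only [matPow, Finset.sum_mul]
      refine Eq.symm ?_
      rw [show n + K + 2 = (n + K + 1) + 1 from rfl, Finset.sum_range_succ,
        hMband K n (n + K + 1) (by omega), zero_mul, zero_mul, add_zero]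
      exact Finset.sum_congr rfl fun k _ => by ring
  -- moments of x^K equal matPow entries
  have hT : ∀ K n m, I (fun x => x ^ K * ψ n x * ψ m x) = matPow Q K n m := by
    intro K n m
    rw [show (fun x => x ^ K * ψ n x * ψ m x)
        = fun x => (∑ k ∈ Finset.range (n + K + 1), matPow Q K n k * ψ k x) * ψ m x from
        funext fun x => by rw [← hpow K n x], Isum]
    by_cases hm : m ∈ Finset.range (n + K + 1)
    · rw [if_pos hm]
    · rw [if_neg hm]
      exact (hMband K n m (by simp at hm; omega)).symm
  have hMsym : ∀ K n m, matPow Q K n m = matPow Q K m n := by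
    intro K n m
    rw [← hT, ← hT]
    congr 1
    funext x
    ring
  -- moments of polynomials equal polyMat entries
  have hpolyM : ∀ (Wp : Polynomial ℂ) n m,
      I (fun x => eval x Wp * ψ n x * ψ m x) = polyMat Wp Q n m := by
    intro Wp n m
    have hfe : (fun x => eval x Wp * ψ n x * ψ m x)
        = ∑ K ∈ Finset.range (Wp.natDegree + 1), Wp.coeff K • (fun x => x ^ K * ψ n x * ψ m x) := by
      funext x
      rw [Finset.sum_apply]
      simp only [Pi.smul_apply, smul_eq_mul]
      rw [Polynomial.eval_eq_sum_range]
      rw [Finset.sum_mul, Finset.sum_mul]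
      exact Finset.sum_congr rfl fun K _ => by ring
    rw [hfe, map_sum]
    unfold polyMat
    exact Finset.sum_congr rfl fun K _ => by rw [map_smul, hT, smul_eq_mul]
  -- derivative of ψ n
  have hderiv : ∀ n (x : ℂ), deriv (ψ n) x
      = eval x (derivative (p n)) * Complex.exp (-(eval x V) / 2) / s n
        - 1 / 2 * (eval x (derivative V) * ψ n x) := by
    intro n x
    have hfun : ψ n = fun y => eval y (p n) * Complex.exp (-(eval y V) / 2) / s n :=
      funext (hψ n)
    have h1 : HasDerivAt (fun y : ℂ => eval y (p n)) (eval x (derivative (p n))) x :=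
      Polynomial.hasDerivAt (p n) x
    have h2 : HasDerivAt (fun y : ℂ => -(eval y V) / 2) (-(eval x (derivative V)) / 2) x :=
      ((Polynomial.hasDerivAt V x).neg).div_const 2
    have h3 : HasDerivAt (fun y : ℂ => Complex.exp (-(eval y V) / 2))
        (Complex.exp (-(eval x V) / 2) * (-(eval x (derivative V)) / 2)) x := h2.cexp
    have h4 : HasDerivAt (fun y => eval y (p n) * Complex.exp (-(eval y V) / 2) / s n) _ x :=
      (h1.mul h3).div_const (s n)
    conv_lhs => rw [hfun]
    rw [h4.deriv, hψ n x]
    ring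
  -- split P into a strictly lower part and the potential part
  have hPsplit : ∀ n m, P n m
      = I (fun x => eval x (derivative (p n)) * Complex.exp (-(eval x V) / 2) / s n * ψ m x)
        - 1 / 2 * polyMat (derivative V) Q n m := by
    intro n m
    rw [hP n m]
    have hfe : (fun x => deriv (ψ n) x * ψ m x)
        = (fun x => eval x (derivative (p n)) * Complex.exp (-(eval x V) / 2) / s n * ψ m x)
          + ((-(1 / 2) : ℂ) • fun x => eval x (derivative V) * ψ n x * ψ m x) := by
      funext x
      simp only [Pi.add_apply, Pi.smul_apply, smul_eq_mul]
      rw [hderiv n x]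
      ring
    rw [hfe, map_add, map_smul, hpolyM, smul_eq_mul]
    ring
  -- the lower part vanishes above the diagonal (and on it)
  have hA0 : ∀ n m, n ≤ m →
      I (fun x => eval x (derivative (p n)) * Complex.exp (-(eval x V) / 2) / s n * ψ m x) = 0 := by
    intro n m hnm
    have hdeg : (derivative (p n)).degree < (n : WithBot ℕ) := by
      have h := Polynomial.degree_derivative_lt (hp n).1.ne_zero
      rwa [Polynomial.degree_eq_natDegree (hp n).1.ne_zero, (hp n).2] at h
    obtain ⟨c, hc⟩ := expand (derivative (p n)) n n hdeg
    rw [show (fun x => eval x (derivative (p n)) * Complex.exp (-(eval x V) / 2) / s n * ψ m x)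
        = fun x => (∑ k ∈ Finset.range n, c k * ψ k x) * ψ m x from
        funext fun x => by rw [hc x], Isum]
    rw [if_neg (by simp; omega)]
  have hpolySym : ∀ n m, polyMat (derivative V) Q n m = polyMat (derivative V) Q m n := by
    intro n m
    unfold polyMat
    exact Finset.sum_congr rfl fun K _ => by rw [hMsym K n m]
  -- final assembly
  intro n m
  rcases lt_trichotomy n m with h | h | h
  · rw [if_pos h, if_neg (by omega)]
    rw [hPsplit n m, hA0 n m h.le]
    ring
  · subst h
    simp only [lt_self_iff_false, if_false]
    have h2 := hanti n n
    have h3 : P n n = 0 := by linear_combination h2 / 2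
    rw [h3]
    ring
  · rw [if_neg (by omega), if_pos h]
    have h1 := hanti n m
    have h4 : P m n = -(1 / 2) * polyMat (derivative V) Q m n := by
      rw [hPsplit m n, hA0 m n h.le]
      ring
    have h5 : P m n = -(1 / 2) * polyMat (derivative V) Q n m := by
      rw [h4, hpolySym m n]
    linear_combination h1 - h5
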